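/- For all integers k ≥ 1, j ≥ 1, n ≥ 1 and r ≥ 0, one has M(n,k,r,r+j) = Σ N(n_0, k−1, r_0) · ∏_{i=1}^{j} M(n_i, 0, r_i, r_i+1), where the sum is over all (j+1)-tuples (n_0, n_1,…,n_j) of positive integers with n_0+n_1+⋯+n_j = n and all (j+1)-tuples (r_0, r_1,…,r_j) of nonnegative integers with r_0+r_1+⋯+r_j = r. -/

import Mathlib

/-- The x-coordinate (number of East steps) of the lattice path `P` after `m` steps. -/
def latticePos {n : ℕ} (P : Fin n → Bool) (m : ℕ) : ℕ :=
  (Finset.univ.filter (fun i : Fin n => (i : ℕ) < m ∧ P i = true)).card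

/-- The number of intersections of paths `P` and `Q` (common lattice points with
coordinate sum strictly between `0` and `n`). -/
def latticeInter {n : ℕ} (P Q : Fin n → Bool) : ℕ :=
  ((Finset.Ioo 0 n).filter (fun m => latticePos P m = latticePos Q m)).card

/-- Number of ordered pairs of lattice paths of length `n`, ending at `(r, n-r)` and
`(s, n-s)` respectively, intersecting exactly `k` times (natural-number version). -/
def Mnat (n k r s : ℕ) : ℕ :=
  (Finset.univ.filter (fun PQ : (Fin n → Bool) × (Fin n → Bool) =>
      latticePos PQ.1 n = r ∧ latticePos PQ.2 n = s ∧ latticeInter PQ.1 PQ.2 = k)).card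

/-- `M n k r s`, extended by zero to integer arguments. -/
def M (n k r s : ℤ) : ℤ :=
  if 0 ≤ n ∧ 0 ≤ k ∧ 0 ≤ r ∧ 0 ≤ s then Mnat n.toNat k.toNat r.toNat s.toNat else 0

/-- `N n k r = M n k r r`. -/
def N (n k r : ℤ) : ℤ := M n k r r

/-- `NE n k p = Σ_{r+s=2p, 0 ≤ r,s ≤ n} M n k r s`. -/
noncomputable def NE (n k p : ℤ) : ℤ := ∑ r ∈ Finset.Icc (0 : ℤ) n, M n k r (2 * p - r)

/-- `NO n k p = Σ_{r+s=2p+1, 0 ≤ r,s ≤ n} M n k r s`. -/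
noncomputable def NO (n k p : ℤ) : ℤ := ∑ r ∈ Finset.Icc (0 : ℤ) n, M n k r (2 * p + 1 - r)

/-- Binomial coefficient for integer arguments (zero unless both are nonnegative). -/
def ichoose (a b : ℤ) : ℤ :=
  if 0 ≤ a ∧ 0 ≤ b then (a.toNat).choose b.toNat else 0

open Finset

namespace LatticeAux

variable {n : ℕ}

lemma lp_zero (P : Fin n → Bool) : latticePos P 0 = 0 := by
  simp [latticePos]

lemma lp_mono (P : Fin n → Bool) {a b : ℕ} (h : a ≤ b) : latticePos P a ≤ latticePos P b := by
  apply Finset.card_le_card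
  intro i hi
  simp only [mem_filter] at *
  exact ⟨hi.1, lt_of_lt_of_le hi.2.1 h, hi.2.2⟩

lemma lp_succ_le (P : Fin n → Bool) (m : ℕ) : latticePos P (m+1) ≤ latticePos P m + 1 := by
  have h1 : (Finset.univ.filter (fun i : Fin n => (i : ℕ) < m + 1 ∧ P i = true)) ⊆
      (Finset.univ.filter (fun i : Fin n => (i : ℕ) < m ∧ P i = true)) ∪
      (Finset.univ.filter (fun i : Fin n => (i : ℕ) = m)) := by
    intro i hi
    simp only [mem_filter, mem_union] at *
    obtain ⟨h0, h1, h2⟩ := hi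
    by_cases hc : (i:ℕ) < m
    · exact Or.inl ⟨h0, hc, h2⟩
    · exact Or.inr ⟨h0, by omega⟩
  calc latticePos P (m+1) ≤ _ := Finset.card_le_card h1
    _ ≤ _ + _ := Finset.card_union_le _ _
    _ ≤ latticePos P m + 1 := by
        refine Nat.add_le_add_left ?_ _
        apply Finset.card_le_one.2 ?_ |>.trans (le_refl 1)
        intro i hi j hj
        simp only [mem_filter] at hi hj
        exact Fin.ext (hi.2.trans hj.2.symm)

lemma lp_stable (P : Fin n → Bool) {m : ℕ} (h : n ≤ m) : latticePos P m = latticePos P n := by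
  refine le_antisymm ?_ (lp_mono P h)
  apply Finset.card_le_card
  intro i hi
  simp only [mem_filter] at *
  exact ⟨hi.1, i.isLt, hi.2.2⟩

lemma lp_le (P : Fin n → Bool) (m : ℕ) : latticePos P m ≤ m := by
  classical
  have : (Finset.univ.filter (fun i : Fin n => (i : ℕ) < m ∧ P i = true)).card ≤
      (Finset.range m).card :=
    Finset.card_le_card_of_injOn (fun i => (i : ℕ))
      (by intro i hi; simp only [mem_coe, mem_filter] at hi; simpa using hi.2.1)
      (by intro i _ j _ hij; exact Fin.ext hij)
  simpa [latticePos] using this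

lemma lp_split (P : Fin n → Bool) {a m : ℕ} (h : a ≤ m) :
    latticePos P m = latticePos P a +
      (Finset.univ.filter (fun i : Fin n => a ≤ (i:ℕ) ∧ (i:ℕ) < m ∧ P i = true)).card := by
  unfold latticePos
  rw [← Finset.card_union_of_disjoint]
  · congr 1
    ext i
    simp only [mem_filter, mem_union, mem_filter]
    constructor
    · intro ⟨h1, h2, h3⟩
      by_cases hc : (i:ℕ) < a
      · exact Or.inl ⟨h1, hc, h3⟩
      · exact Or.inr ⟨h1, by omega, h2, h3⟩
    · rintro (⟨h1, h2, h3⟩ | ⟨h1, h2, h3, h4⟩)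
      · exact ⟨h1, by omega, h3⟩
      · exact ⟨h1, h3, h4⟩
  · rw [Finset.disjoint_left]
    intro i hi hi'
    simp only [mem_filter] at hi hi'
    omega


def takeP {n : ℕ} (a : ℕ) (P : Fin n → Bool) : Fin a → Bool :=
  fun i => if h : (i:ℕ) < n then P ⟨i, h⟩ else false

def dropP {n : ℕ} (a b : ℕ) (P : Fin n → Bool) : Fin b → Bool :=
  fun i => if h : a + (i:ℕ) < n then P ⟨a + (i:ℕ), h⟩ else false

def catP {a b n : ℕ} (h : a + b = n) (P1 : Fin a → Bool) (P2 : Fin b → Bool) : Fin n → Bool :=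
  fun m => if h' : (m:ℕ) < a then P1 ⟨m, h'⟩ else P2 ⟨(m:ℕ) - a, by
    have := m.isLt; omega⟩

lemma takeP_eq {n a : ℕ} (P : Fin n → Bool) {i : Fin a} (h : (i:ℕ) < n) :
    takeP a P i = P ⟨i, h⟩ := dif_pos h

lemma dropP_eq {n a b : ℕ} (P : Fin n → Bool) {i : Fin b} (h : a + (i:ℕ) < n) :
    dropP a b P i = P ⟨a + (i:ℕ), h⟩ := dif_pos h

lemma catP_lt {a b n : ℕ} (h : a + b = n) (P1 : Fin a → Bool) (P2 : Fin b → Bool)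
    {m : Fin n} (h' : (m:ℕ) < a) : catP h P1 P2 m = P1 ⟨m, h'⟩ := dif_pos h'

lemma catP_ge {a b n : ℕ} (h : a + b = n) (P1 : Fin a → Bool) (P2 : Fin b → Bool)
    {m : Fin n} (h' : ¬ (m:ℕ) < a) :
    catP h P1 P2 m = P2 ⟨(m:ℕ) - a, by have := m.isLt; omega⟩ := dif_neg h'

lemma lp_take (P : Fin n → Bool) {a m : ℕ} (ha : a ≤ n) (hm : m ≤ a) :
    latticePos (takeP a P) m = latticePos P m := by
  unfold latticePos
  refine Finset.card_bij (fun i _ => (⟨(i:ℕ), by have := i.isLt; omega⟩ : Fin n)) ?_ ?_ ?_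
  · intro i hi
    obtain ⟨-, h1, h2⟩ := Finset.mem_filter.mp hi
    refine Finset.mem_filter.mpr ⟨mem_univ _, h1, ?_⟩
    rw [takeP_eq P (by have := i.isLt; omega : (i:ℕ) < n)] at h2
    exact h2
  · intro i _ i' _ hii'
    have := congrArg (Fin.val : Fin n → ℕ) hii'
    simp only [Fin.val_mk] at this
    exact Fin.ext this
  · intro j hj
    obtain ⟨-, h1, h2⟩ := Finset.mem_filter.mp hj
    refine ⟨⟨(j:ℕ), by omega⟩, Finset.mem_filter.mpr ⟨mem_univ _, h1, ?_⟩, Fin.ext rfl⟩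
    rw [takeP_eq P (by have := j.isLt; omega : ((⟨(j:ℕ), by omega⟩ : Fin a) : ℕ) < n)]
    have : (⟨((⟨(j:ℕ), by omega⟩ : Fin a) : ℕ), by have := j.isLt; omega⟩ : Fin n) = j :=
      Fin.ext rfl
    rw [this]
    exact h2

lemma lp_drop (P : Fin n → Bool) {a b m : ℕ} (hab : a + b = n) (hm : m ≤ b) :
    latticePos P a + latticePos (dropP a b P) m = latticePos P (a + m) := by
  rw [lp_split P (by omega : a ≤ a + m)]
  congr 1
  unfold latticePos
  refine Finset.card_bij (fun i _ => (⟨a + (i:ℕ), by have := i.isLt; omega⟩ : Fin n)) ?_ ?_ ?_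
  · intro i hi
    obtain ⟨-, h1, h2⟩ := Finset.mem_filter.mp hi
    refine Finset.mem_filter.mpr ⟨mem_univ _, by simp, by simp; omega, ?_⟩
    rw [dropP_eq P (by have := i.isLt; omega : a + (i:ℕ) < n)] at h2
    exact h2
  · intro i _ i' _ hii'
    have := congrArg (Fin.val : Fin n → ℕ) hii'
    simp only [Fin.val_mk] at this
    exact Fin.ext (by omega)
  · intro j hj
    obtain ⟨-, h1, h2, h3⟩ := Finset.mem_filter.mp hj
    have hjb : (j:ℕ) - a < b := by omega
    refine ⟨⟨(j:ℕ) - a, hjb⟩, Finset.mem_filter.mpr ⟨mem_univ _, by simp; omega, ?_⟩,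
      Fin.ext (by simp; omega)⟩
    rw [dropP_eq P (by simp; omega : a + ((⟨(j:ℕ) - a, hjb⟩ : Fin b) : ℕ) < n)]
    have : (⟨a + ((⟨(j:ℕ) - a, hjb⟩ : Fin b) : ℕ), by simp; omega⟩ : Fin n) = j :=
      Fin.ext (by simp; omega)
    rw [this]
    exact h3

lemma take_cat {a b n : ℕ} (h : a + b = n) (P1 : Fin a → Bool) (P2 : Fin b → Bool) :
    takeP a (catP h P1 P2) = P1 := by
  funext i
  have hi := i.isLt
  rw [takeP_eq _ (by omega : (i:ℕ) < n), catP_lt h P1 P2 (by simpa using hi)]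

lemma drop_cat {a b n : ℕ} (h : a + b = n) (P1 : Fin a → Bool) (P2 : Fin b → Bool) :
    dropP a b (catP h P1 P2) = P2 := by
  funext i
  have hi := i.isLt
  rw [dropP_eq _ (by omega : a + (i:ℕ) < n), catP_ge h P1 P2 (by simp)]
  congr 1
  exact Fin.ext (by simp)

lemma cat_take_drop {a n : ℕ} (h : a + (n - a) = n) (P : Fin n → Bool) :
    catP h (takeP a P) (dropP a (n - a) P) = P := by
  funext m
  have hm := m.isLt
  by_cases hc : (m:ℕ) < a
  · rw [catP_lt h _ _ hc, takeP_eq P (by simpa using hm)]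
  · rw [catP_ge h _ _ hc, dropP_eq P (by simp; omega)]
    congr 1
    exact Fin.ext (by simp; omega)


def dZ {n : ℕ} (P Q : Fin n → Bool) (m : ℕ) : ℤ := (latticePos Q m : ℤ) - latticePos P m

lemma dZ_zero (P Q : Fin n → Bool) : dZ P Q 0 = 0 := by simp [dZ, lp_zero]

lemma dZ_succ_le (P Q : Fin n → Bool) (m : ℕ) : dZ P Q (m+1) ≤ dZ P Q m + 1 := by
  unfold dZ
  have h1 := lp_succ_le Q m
  have h2 := lp_mono P (by omega : m ≤ m + 1)
  push_cast
  omega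

lemma dZ_le_succ (P Q : Fin n → Bool) (m : ℕ) : dZ P Q m ≤ dZ P Q (m+1) + 1 := by
  unfold dZ
  have h1 := lp_succ_le P m
  have h2 := lp_mono Q (by omega : m ≤ m + 1)
  push_cast
  omega

/-- `maxLe v P Q` : the largest `m ≤ n` with `dZ P Q m ≤ v`. -/
def maxLe {n : ℕ} (v : ℕ) (P Q : Fin n → Bool) : ℕ :=
  ((Finset.range (n+1)).filter (fun m => dZ P Q m ≤ v)).max'
    ⟨0, by simp [dZ_zero]⟩

lemma maxLe_mem (v : ℕ) (P Q : Fin n → Bool) :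
    maxLe v P Q ∈ (Finset.range (n+1)).filter (fun m => dZ P Q m ≤ v) :=
  Finset.max'_mem _ _

lemma maxLe_le (v : ℕ) (P Q : Fin n → Bool) : maxLe v P Q ≤ n := by
  have := maxLe_mem v P Q
  simp only [Finset.mem_filter, Finset.mem_range] at this
  omega

lemma dZ_maxLe_le (v : ℕ) (P Q : Fin n → Bool) : dZ P Q (maxLe v P Q) ≤ v := by
  have := maxLe_mem v P Q
  simp only [Finset.mem_filter] at this
  exact this.2

lemma le_maxLe (v : ℕ) (P Q : Fin n → Bool) {m : ℕ} (hm : m ≤ n) (h : dZ P Q m ≤ v) :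
    m ≤ maxLe v P Q :=
  Finset.le_max' _ m (by simp only [Finset.mem_filter, Finset.mem_range]; exact ⟨by omega, h⟩)

lemma lt_dZ_of_maxLe_lt (v : ℕ) (P Q : Fin n → Bool) {m : ℕ} (hm : m ≤ n)
    (h : maxLe v P Q < m) : (v : ℤ) < dZ P Q m := by
  by_contra hc
  push_neg at hc
  exact absurd (le_maxLe v P Q hm hc) (by omega)

lemma maxLe_lt (v : ℕ) (P Q : Fin n → Bool) (hj : (v : ℤ) < dZ P Q n) : maxLe v P Q < n := by
  rcases Nat.lt_or_ge (maxLe v P Q) n with h | h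
  · exact h
  · have h2 := dZ_maxLe_le v P Q
    have h3 : maxLe v P Q = n := le_antisymm (maxLe_le v P Q) h
    rw [h3] at h2
    omega

lemma dZ_maxLe (v : ℕ) (P Q : Fin n → Bool) (hj : (v : ℤ) < dZ P Q n) :
    dZ P Q (maxLe v P Q) = v := by
  have h1 := dZ_maxLe_le v P Q
  have h2 := maxLe_lt v P Q hj
  have h3 : (v : ℤ) < dZ P Q (maxLe v P Q + 1) :=
    lt_dZ_of_maxLe_lt v P Q (by omega) (by omega)
  have h4 := dZ_succ_le P Q (maxLe v P Q)
  omega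

lemma maxLe_eq (v : ℕ) (P Q : Fin n → Bool) (a : ℕ) (ha : a ≤ n)
    (h1 : dZ P Q a ≤ v) (h2 : ∀ m, a < m → m ≤ n → (v:ℤ) < dZ P Q m) :
    maxLe v P Q = a := by
  have hle := le_maxLe v P Q ha h1
  rcases Nat.lt_or_ge a (maxLe v P Q) with h | h
  · have := h2 (maxLe v P Q) h (maxLe_le v P Q)
    have := dZ_maxLe_le v P Q
    omega
  · omega

lemma inter_eq_card (P Q : Fin n → Bool) :
    latticeInter P Q = ((Finset.Ioo 0 n).filter (fun m => dZ P Q m = 0)).card := by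
  unfold latticeInter
  congr 1
  apply Finset.filter_congr
  intro m _
  unfold dZ
  constructor
  · intro h; omega
  · intro h; omega

lemma dZ_pos_of_inter_zero {b : ℕ} (P Q : Fin b → Bool) (hI : latticeInter P Q = 0)
    (hend : 0 < dZ P Q b) : ∀ m, 0 < m → m ≤ b → 1 ≤ dZ P Q m := by
  intro m hm0 hmb
  by_contra hc
  push_neg at hc
  have hne : ((Finset.range (b+1)).filter (fun x => m ≤ x ∧ dZ P Q x ≤ 0)).Nonempty :=
    ⟨m, by simp only [Finset.mem_filter, Finset.mem_range]; exact ⟨by omega, le_refl m, by omega⟩⟩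
  set u := ((Finset.range (b+1)).filter (fun x => m ≤ x ∧ dZ P Q x ≤ 0)).max' hne with hu
  have humem := Finset.max'_mem _ hne
  rw [← hu] at humem
  simp only [Finset.mem_filter, Finset.mem_range] at humem
  obtain ⟨hub, hmu, hdu⟩ := humem
  have hub' : u ≤ b := by omega
  have hune : u ≠ b := by
    intro h; rw [h] at hdu; omega
  have hsu : 0 < dZ P Q (u+1) := by
    by_contra hc2
    push_neg at hc2
    have : u + 1 ≤ u := Finset.le_max' _ (u+1)
      (by simp only [Finset.mem_filter, Finset.mem_range]; exact ⟨by omega, by omega, hc2⟩)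
    omega
  have hdu0 : dZ P Q u = 0 := by
    have := dZ_succ_le P Q u
    omega
  have : u ∈ (Finset.Ioo 0 b).filter (fun x => dZ P Q x = 0) := by
    simp only [Finset.mem_filter, Finset.mem_Ioo]
    exact ⟨⟨by omega, by omega⟩, hdu0⟩
  rw [inter_eq_card] at hI
  have h0 : (Finset.Ioo 0 b).filter (fun x => dZ P Q x = 0) = ∅ := Finset.card_eq_zero.mp hI
  rw [h0] at this
  exact absurd this (Finset.notMem_empty u)


lemma backward_facts {n0 n1 n : ℕ} (h : n0 + n1 = n) (j v k k0 r0 r1 : ℕ)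
    (hvj : v < j) (hcase : (v = 0 ∧ k0 + 1 = k) ∨ (v = 1 ∧ k = 0 ∧ k0 = 0))
    (hn0 : 0 < n0)
    (P1 Q1 : Fin n0 → Bool) (P2 Q2 : Fin n1 → Bool)
    (hP1 : latticePos P1 n0 = r0) (hQ1 : latticePos Q1 n0 = r0 + v)
    (hI1 : latticeInter P1 Q1 = k0)
    (hP2 : latticePos P2 n1 = r1) (hQ2 : latticePos Q2 n1 = r1 + (j - v))
    (hI2 : latticeInter P2 Q2 = 0) :
    latticePos (catP h P1 P2) n = r0 + r1 ∧
    latticePos (catP h Q1 Q2) n = (r0 + r1) + j ∧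
    latticeInter (catP h P1 P2) (catP h Q1 Q2) = k ∧
    maxLe v (catP h P1 P2) (catP h Q1 Q2) = n0 ∧
    latticePos (catP h P1 P2) n0 = r0 := by
  have hn1 : 0 < n1 := by
    rcases Nat.eq_zero_or_pos n1 with h0 | h0
    · subst h0
      rw [lp_zero] at hP2 hQ2
      omega
    · exact h0
  have hd2pos : ∀ m, 0 < m → m ≤ n1 → 1 ≤ dZ P2 Q2 m := by
    apply dZ_pos_of_inter_zero P2 Q2 hI2
    unfold dZ
    rw [hP2, hQ2]
    push_cast
    omega
  have hlowP : ∀ m, m ≤ n0 → latticePos (catP h P1 P2) m = latticePos P1 m := by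
    intro m hm
    rw [← lp_take (catP h P1 P2) (by omega : n0 ≤ n) hm, take_cat h P1 P2]
  have hlowQ : ∀ m, m ≤ n0 → latticePos (catP h Q1 Q2) m = latticePos Q1 m := by
    intro m hm
    rw [← lp_take (catP h Q1 Q2) (by omega : n0 ≤ n) hm, take_cat h Q1 Q2]
  have hhighP : ∀ m, m ≤ n1 →
      latticePos (catP h P1 P2) (n0 + m) = latticePos P1 n0 + latticePos P2 m := by
    intro m hm
    rw [← lp_drop (catP h P1 P2) h hm, drop_cat h P1 P2, hlowP n0 le_rfl]
  have hhighQ : ∀ m, m ≤ n1 →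
      latticePos (catP h Q1 Q2) (n0 + m) = latticePos Q1 n0 + latticePos Q2 m := by
    intro m hm
    rw [← lp_drop (catP h Q1 Q2) h hm, drop_cat h Q1 Q2, hlowQ n0 le_rfl]
  have hC1 : latticePos (catP h P1 P2) n = r0 + r1 := by
    have e := hhighP n1 le_rfl
    rw [h, hP1, hP2] at e
    exact e
  have hC2 : latticePos (catP h Q1 Q2) n = (r0 + r1) + j := by
    have e := hhighQ n1 le_rfl
    rw [h, hQ1, hQ2] at e
    rw [e]
    omega
  have hdhigh : ∀ m, m ≤ n1 →
      dZ (catP h P1 P2) (catP h Q1 Q2) (n0 + m) = v + dZ P2 Q2 m := by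
    intro m hm
    unfold dZ
    rw [hhighP m hm, hhighQ m hm, hP1, hQ1]
    push_cast
    ring
  have hCt : maxLe v (catP h P1 P2) (catP h Q1 Q2) = n0 := by
    have hd0 : dZ (catP h P1 P2) (catP h Q1 Q2) n0 = (v:ℤ) := by
      have e := hdhigh 0 (by omega)
      rw [Nat.add_zero, dZ_zero] at e
      omega
    refine maxLe_eq v _ _ n0 (by omega) (by omega) ?_
    intro m hm1 hm2
    have hd := hdhigh (m - n0) (by omega)
    rw [show n0 + (m - n0) = m by omega] at hd
    have hp := hd2pos (m - n0) (by omega) (by omega)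
    omega
  have hCI : latticeInter (catP h P1 P2) (catP h Q1 Q2) = k := by
    unfold latticeInter
    have hsplit : Finset.Ioo 0 n = Finset.Ioo 0 n0 ∪ Finset.Ico n0 n := by
      ext m
      simp only [Finset.mem_Ioo, Finset.mem_union, Finset.mem_Ico]
      omega
    have hdisj : Disjoint (Finset.Ioo 0 n0) (Finset.Ico n0 n) := by
      rw [Finset.disjoint_left]
      intro m hm hm'
      simp only [Finset.mem_Ioo] at hm
      simp only [Finset.mem_Ico] at hm'
      omega
    rw [hsplit, Finset.filter_union, Finset.card_union_of_disjoint
      (Finset.disjoint_filter_filter hdisj)]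
    have hlowcard : ((Finset.Ioo 0 n0).filter (fun m =>
        latticePos (catP h P1 P2) m = latticePos (catP h Q1 Q2) m)).card = k0 := by
      rw [← hI1]
      unfold latticeInter
      congr 1
      apply Finset.filter_congr
      intro m hm
      simp only [Finset.mem_Ioo] at hm
      rw [hlowP m (le_of_lt hm.2), hlowQ m (le_of_lt hm.2)]
    rw [hlowcard]
    rcases hcase with ⟨hv0, hk⟩ | ⟨hv1, hk0, hkk⟩
    · have hsingle : (Finset.Ico n0 n).filter (fun m =>
          latticePos (catP h P1 P2) m = latticePos (catP h Q1 Q2) m) = {n0} := by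
        ext m
        simp only [Finset.mem_filter, Finset.mem_Ico, Finset.mem_singleton]
        constructor
        · rintro ⟨⟨h1, h2⟩, h3⟩
          by_contra hne
          have hd := hdhigh (m - n0) (by omega)
          have hp := hd2pos (m - n0) (by omega) (by omega)
          rw [show n0 + (m - n0) = m by omega] at hd
          have hdc : dZ (catP h P1 P2) (catP h Q1 Q2) m = 0 := by unfold dZ; omega
          omega
        · intro hmn0
          subst hmn0
          refine ⟨⟨le_refl _, by omega⟩, ?_⟩
          rw [hlowP m le_rfl, hlowQ m le_rfl, hP1, hQ1, hv0]
          omega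
      rw [hsingle]
      simp only [Finset.card_singleton]
      omega
    · have hempty : (Finset.Ico n0 n).filter (fun m =>
          latticePos (catP h P1 P2) m = latticePos (catP h Q1 Q2) m) = ∅ := by
        rw [Finset.filter_eq_empty_iff]
        intro m hm
        simp only [Finset.mem_Ico] at hm
        have hd := hdhigh (m - n0) (by omega)
        rw [show n0 + (m - n0) = m by omega] at hd
        intro hcon
        have hdc : dZ (catP h P1 P2) (catP h Q1 Q2) m = 0 := by unfold dZ; omega
        rcases Nat.eq_or_lt_of_le hm.1 with he | hlt
        · have h0 : dZ P2 Q2 (m - n0) = 0 := by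
            rw [show m - n0 = 0 by omega, dZ_zero]
          rw [hdc, h0] at hd
          omega
        · have hp := hd2pos (m - n0) (by omega) (by omega)
          omega
      rw [hempty]
      simp only [Finset.card_empty]
      omega
  exact ⟨hC1, hC2, hCI, hCt, hlowP n0 le_rfl ▸ hP1 ▸ rfl⟩

lemma cut_lemma (n r j v k k0 : ℕ) (hvj : v < j)
    (hcase : (v = 0 ∧ k0 + 1 = k) ∨ (v = 1 ∧ k = 0 ∧ k0 = 0)) :
    Mnat n k r (r + j) =
      ∑ p ∈ (Finset.HasAntidiagonal.antidiagonal n).filter (fun p => 0 < p.1),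
        ∑ q ∈ Finset.HasAntidiagonal.antidiagonal r,
          Mnat p.1 k0 q.1 (q.1 + v) * Mnat p.2 0 q.2 (q.2 + (j - v)) := by
  classical
  set A : Finset ((ℕ × ℕ) × (ℕ × ℕ)) :=
    ((Finset.HasAntidiagonal.antidiagonal n).filter (fun p => 0 < p.1)) ×ˢ Finset.HasAntidiagonal.antidiagonal r with hA
  set B : ∀ pq : (ℕ × ℕ) × (ℕ × ℕ),
      Finset (((Fin pq.1.1 → Bool) × (Fin pq.1.1 → Bool)) ×
        ((Fin pq.1.2 → Bool) × (Fin pq.1.2 → Bool))) :=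
    fun pq =>
      (Finset.univ.filter (fun PQ : (Fin pq.1.1 → Bool) × (Fin pq.1.1 → Bool) =>
        latticePos PQ.1 pq.1.1 = pq.2.1 ∧ latticePos PQ.2 pq.1.1 = pq.2.1 + v ∧
          latticeInter PQ.1 PQ.2 = k0)) ×ˢ
      (Finset.univ.filter (fun PQ : (Fin pq.1.2 → Bool) × (Fin pq.1.2 → Bool) =>
        latticePos PQ.1 pq.1.2 = pq.2.2 ∧ latticePos PQ.2 pq.1.2 = pq.2.2 + (j - v) ∧
          latticeInter PQ.1 PQ.2 = 0)) with hB
  have hRHS : ∑ p ∈ (Finset.HasAntidiagonal.antidiagonal n).filter (fun p => 0 < p.1),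
        ∑ q ∈ Finset.HasAntidiagonal.antidiagonal r,
          Mnat p.1 k0 q.1 (q.1 + v) * Mnat p.2 0 q.2 (q.2 + (j - v)) =
      (A.sigma B).card := by
    rw [Finset.card_sigma, hA, Finset.sum_product]
    refine Finset.sum_congr rfl (fun p _ => Finset.sum_congr rfl (fun q _ => ?_))
    rw [hB]
    rw [Finset.card_product]
    rfl
  rw [hRHS]
  show (Finset.univ.filter (fun PQ : (Fin n → Bool) × (Fin n → Bool) =>
      latticePos PQ.1 n = r ∧ latticePos PQ.2 n = r + j ∧
        latticeInter PQ.1 PQ.2 = k)).card = _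
  refine Finset.card_bij'
    (fun PQ _ =>
      ⟨((maxLe v PQ.1 PQ.2, n - maxLe v PQ.1 PQ.2),
        (latticePos PQ.1 (maxLe v PQ.1 PQ.2), r - latticePos PQ.1 (maxLe v PQ.1 PQ.2))),
        ((takeP (maxLe v PQ.1 PQ.2) PQ.1, takeP (maxLe v PQ.1 PQ.2) PQ.2),
         (dropP (maxLe v PQ.1 PQ.2) (n - maxLe v PQ.1 PQ.2) PQ.1,
          dropP (maxLe v PQ.1 PQ.2) (n - maxLe v PQ.1 PQ.2) PQ.2))⟩)
    (fun b hb =>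
      (catP (by
          have h1 := (Finset.mem_product.mp (Finset.mem_sigma.mp hb).1).1
          simp only [Finset.mem_filter, Finset.HasAntidiagonal.mem_antidiagonal] at h1
          exact h1.1) b.2.1.1 b.2.2.1,
       catP (by
          have h1 := (Finset.mem_product.mp (Finset.mem_sigma.mp hb).1).1
          simp only [Finset.mem_filter, Finset.HasAntidiagonal.mem_antidiagonal] at h1
          exact h1.1) b.2.1.2 b.2.2.2))
    ?_ ?_ ?_ ?_
  · -- forward membership
    rintro ⟨P, Q⟩ hPQ
    obtain ⟨-, hP, hQ, hI⟩ := Finset.mem_filter.mp hPQ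
    dsimp only at hP hQ hI ⊢
    have hdn : dZ P Q n = (j : ℤ) := by unfold dZ; rw [hP, hQ]; push_cast; ring
    have hvlt : (v : ℤ) < dZ P Q n := by rw [hdn]; exact_mod_cast hvj
    have htle : maxLe v P Q ≤ n := maxLe_le v P Q
    have htlt : maxLe v P Q < n := maxLe_lt v P Q hvlt
    have hdt : dZ P Q (maxLe v P Q) = v := dZ_maxLe v P Q hvlt
    have hgt : ∀ m, maxLe v P Q < m → m ≤ n → (v:ℤ) < dZ P Q m :=
      fun m h1 h2 => lt_dZ_of_maxLe_lt v P Q h2 h1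
    have hrle : latticePos P (maxLe v P Q) ≤ r := by
      rw [← hP]; exact lp_mono P htle
    have hQt : latticePos Q (maxLe v P Q) = latticePos P (maxLe v P Q) + v := by
      unfold dZ at hdt; omega
    have ht1 : 1 ≤ maxLe v P Q := by
      rcases hcase with ⟨hv0, hk⟩ | ⟨hv1, hk0, hkk⟩
      · have hkpos : 0 < latticeInter P Q := by omega
        rw [inter_eq_card] at hkpos
        obtain ⟨m, hm⟩ := Finset.card_pos.mp hkpos
        simp only [Finset.mem_filter, Finset.mem_Ioo] at hm
        have hmt : m ≤ maxLe v P Q := le_maxLe v P Q (by omega)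
          (by rw [hm.2]; exact Int.ofNat_nonneg v)
        omega
      · have hn1 : 1 ≤ n := by
          have := lp_le Q n
          rw [hQ] at this
          omega
        have hd1 : dZ P Q 1 ≤ (v:ℤ) := by
          have h1 := dZ_succ_le P Q 0
          rw [dZ_zero] at h1
          norm_num at h1
          omega
        exact le_maxLe v P Q hn1 hd1
    have htn : maxLe v P Q + (n - maxLe v P Q) = n := by omega
    -- intersection counts
    have hinter1 : latticeInter (takeP (maxLe v P Q) P) (takeP (maxLe v P Q) Q) =
        ((Finset.Ioo 0 (maxLe v P Q)).filter
          (fun m => latticePos P m = latticePos Q m)).card := by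
      unfold latticeInter
      congr 1
      apply Finset.filter_congr
      intro m hm
      simp only [Finset.mem_Ioo] at hm
      rw [lp_take P htle (le_of_lt hm.2), lp_take Q htle (le_of_lt hm.2)]
    have hinter1' : latticeInter (takeP (maxLe v P Q) P) (takeP (maxLe v P Q) Q) = k0 := by
      rw [hinter1]
      have hIcard : ((Finset.Ioo 0 n).filter
          (fun m => latticePos P m = latticePos Q m)).card = k := hI
      have hsplit : Finset.Ioo 0 n = Finset.Ioo 0 (maxLe v P Q) ∪ Finset.Ico (maxLe v P Q) n := by
        ext m
        simp only [Finset.mem_Ioo, Finset.mem_union, Finset.mem_Ico]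
        omega
      have hdisj : Disjoint (Finset.Ioo 0 (maxLe v P Q)) (Finset.Ico (maxLe v P Q) n) := by
        rw [Finset.disjoint_left]
        intro m hm hm'
        simp only [Finset.mem_Ioo] at hm
        simp only [Finset.mem_Ico] at hm'
        omega
      rw [hsplit, Finset.filter_union, Finset.card_union_of_disjoint
        (Finset.disjoint_filter_filter hdisj)] at hIcard
      rcases hcase with ⟨hv0, hk⟩ | ⟨hv1, hk0, hkk⟩
      · have hsingle : (Finset.Ico (maxLe v P Q) n).filter
            (fun m => latticePos P m = latticePos Q m) = {maxLe v P Q} := by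
          ext m
          simp only [Finset.mem_filter, Finset.mem_Ico, Finset.mem_singleton]
          constructor
          · rintro ⟨⟨h1, h2⟩, h3⟩
            by_contra hne
            have hmgt : maxLe v P Q < m := by omega
            have := hgt m hmgt (by omega)
            unfold dZ at this
            omega
          · intro h
            subst h
            refine ⟨⟨le_refl _, htlt⟩, ?_⟩
            omega
        rw [hsingle] at hIcard
        simp only [Finset.card_singleton] at hIcard
        omega
      · have : ((Finset.Ioo 0 (maxLe v P Q)).filter
            (fun m => latticePos P m = latticePos Q m)).card ≤ k := by
          rw [← hIcard]
          omega
        omega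
    have hinter2 : latticeInter (dropP (maxLe v P Q) (n - maxLe v P Q) P)
        (dropP (maxLe v P Q) (n - maxLe v P Q) Q) = 0 := by
      unfold latticeInter
      rw [Finset.card_eq_zero, Finset.filter_eq_empty_iff]
      intro m hm
      simp only [Finset.mem_Ioo] at hm
      have hmle : m ≤ n - maxLe v P Q := le_of_lt hm.2
      have e1 := lp_drop P htn hmle
      have e2 := lp_drop Q htn hmle
      have hgtm := hgt (maxLe v P Q + m) (by omega) (by omega)
      unfold dZ at hgtm
      intro hcon
      rw [hcon] at e1
      omega
    refine Finset.mem_sigma.mpr ⟨?_, ?_⟩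
    · refine Finset.mem_product.mpr ⟨?_, ?_⟩
      · simp only [Finset.mem_filter, Finset.HasAntidiagonal.mem_antidiagonal]
        exact ⟨htn, ht1⟩
      · simp only [Finset.HasAntidiagonal.mem_antidiagonal]
        omega
    · refine Finset.mem_product.mpr ⟨?_, ?_⟩
      · simp only [Finset.mem_filter, Finset.mem_univ, true_and]
        refine ⟨?_, ?_, hinter1'⟩
        · exact lp_take P htle le_rfl
        · rw [lp_take Q htle le_rfl]; exact hQt
      · simp only [Finset.mem_filter, Finset.mem_univ, true_and]
        have e1 := lp_drop P htn (le_refl (n - maxLe v P Q))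
        have e2 := lp_drop Q htn (le_refl (n - maxLe v P Q))
        rw [htn, hP] at e1
        rw [htn, hQ] at e2
        refine ⟨by omega, by omega, hinter2⟩
  · -- backward membership
    rintro ⟨⟨⟨n0, n1⟩, ⟨r0, r1⟩⟩, ⟨⟨P1, Q1⟩, ⟨P2, Q2⟩⟩⟩ hb
    have hb' := hb
    rw [Finset.mem_sigma] at hb'
    obtain ⟨hb1, hb2⟩ := hb'
    rw [hA, Finset.mem_product] at hb1
    obtain ⟨hbn, hbr⟩ := hb1
    simp only [Finset.mem_filter, Finset.HasAntidiagonal.mem_antidiagonal] at hbn hbr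
    rw [hB, Finset.mem_product] at hb2
    obtain ⟨hs1, hs2⟩ := hb2
    simp only [Finset.mem_filter, Finset.mem_univ, true_and] at hs1 hs2
    obtain ⟨hP1, hQ1, hI1⟩ := hs1
    obtain ⟨hP2, hQ2, hI2⟩ := hs2
    have hn : n0 + n1 = n := hbn.1
    obtain ⟨hc1, hc2, hcI, hct, hcr⟩ := backward_facts hn j v k k0 r0 r1 hvj hcase hbn.2
      P1 Q1 P2 Q2 hP1 hQ1 hI1 hP2 hQ2 hI2
    refine Finset.mem_filter.mpr ⟨Finset.mem_univ _, ?_, ?_, ?_⟩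
    · dsimp only
      exact hc1.trans hbr
    · dsimp only
      have e : (r0 + r1) + j = r + j := by omega
      exact hc2.trans e
    · dsimp only
      exact hcI
  · -- left inverse
    rintro ⟨P, Q⟩ hPQ
    dsimp only
    have e1 := cat_take_drop (show maxLe v P Q + (n - maxLe v P Q) = n by
      have := maxLe_le v P Q; omega) P
    have e2 := cat_take_drop (show maxLe v P Q + (n - maxLe v P Q) = n by
      have := maxLe_le v P Q; omega) Q
    exact Prod.ext e1 e2
  · -- right inverse
    rintro ⟨⟨⟨n0, n1⟩, ⟨r0, r1⟩⟩, ⟨⟨P1, Q1⟩, ⟨P2, Q2⟩⟩⟩ hb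
    have hb' := hb
    rw [Finset.mem_sigma] at hb'
    obtain ⟨hb1, hb2⟩ := hb'
    rw [hA, Finset.mem_product] at hb1
    obtain ⟨hbn, hbr⟩ := hb1
    simp only [Finset.mem_filter, Finset.HasAntidiagonal.mem_antidiagonal] at hbn hbr
    rw [hB, Finset.mem_product] at hb2
    obtain ⟨hs1, hs2⟩ := hb2
    simp only [Finset.mem_filter, Finset.mem_univ, true_and] at hs1 hs2
    obtain ⟨hP1, hQ1, hI1⟩ := hs1
    obtain ⟨hP2, hQ2, hI2⟩ := hs2
    have hn : n0 + n1 = n := hbn.1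
    obtain ⟨hc1, hc2, hcI, hct, hcr⟩ := backward_facts hn j v k k0 r0 r1 hvj hcase hbn.2
      P1 Q1 P2 Q2 hP1 hQ1 hI1 hP2 hQ2 hI2
    dsimp only
    have hn1e : n1 = n - n0 := by omega
    subst hn1e
    have hr1e : r1 = r - r0 := by omega
    subst hr1e
    rw [hct, hcr]
    congr 1
    exact Prod.ext (Prod.ext (take_cat hn P1 P2) (take_cat hn Q1 Q2))
      (Prod.ext (drop_cat hn P1 P2) (drop_cat hn Q1 Q2))


lemma Mnat_zero_s (k r s : ℕ) (hs : 0 < s) : Mnat 0 k r s = 0 := by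
  unfold Mnat
  rw [Finset.card_eq_zero, Finset.filter_eq_empty_iff]
  intro PQ _
  rintro ⟨h1, h2, h3⟩
  rw [lp_zero] at h2
  omega

lemma sum_tuple_succ {M : Type*} [AddCommMonoid M] (j n : ℕ) (f : (Fin (j+1) → ℕ) → M) :
    ∑ c ∈ Finset.Nat.antidiagonalTuple (j+1) n, f c =
      ∑ p ∈ Finset.HasAntidiagonal.antidiagonal n, ∑ c ∈ Finset.Nat.antidiagonalTuple j p.2,
        f (Fin.cons p.1 c) := by
  rw [← Finset.sum_sigma (Finset.HasAntidiagonal.antidiagonal n) (fun p => Finset.Nat.antidiagonalTuple j p.2)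
    (fun x => f (Fin.cons x.1.1 x.2))]
  refine Finset.sum_nbij' (fun c => ⟨(c 0, ∑ i : Fin j, c i.succ), Fin.tail c⟩)
    (fun x => Fin.cons x.1.1 x.2) ?_ ?_ ?_ ?_ ?_
  · intro c hc
    rw [Finset.Nat.mem_antidiagonalTuple] at hc
    refine Finset.mem_sigma.mpr ⟨?_, ?_⟩
    · rw [Finset.HasAntidiagonal.mem_antidiagonal]
      rw [← hc, Fin.sum_univ_succ]
    · rw [Finset.Nat.mem_antidiagonalTuple]
      rfl
  · intro x hx
    obtain ⟨hx1, hx2⟩ := Finset.mem_sigma.mp hx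
    rw [Finset.HasAntidiagonal.mem_antidiagonal] at hx1
    rw [Finset.Nat.mem_antidiagonalTuple] at hx2 ⊢
    rw [Fin.sum_univ_succ]
    simp only [Fin.cons_zero, Fin.cons_succ]
    rw [hx2]
    exact hx1
  · intro c _
    exact Fin.cons_self_tail c
  · intro x hx
    obtain ⟨hx1, hx2⟩ := Finset.mem_sigma.mp hx
    rw [Finset.Nat.mem_antidiagonalTuple] at hx2
    refine Sigma.ext ?_ ?_
    · simp only [Fin.cons_zero, Fin.cons_succ]
      rw [hx2]
    · simp only [Fin.tail_cons]
      exact heq_of_eq rfl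
  · intro c _
    rw [Fin.cons_self_tail c]

def Gnat (j n r : ℕ) : ℕ :=
  ∑ c ∈ (Finset.Nat.antidiagonalTuple j n).filter (fun c => ∀ i, 0 < c i),
    ∑ d ∈ Finset.Nat.antidiagonalTuple j r,
      ∏ i : Fin j, Mnat (c i) 0 (d i) (d i + 1)

lemma ite_sum {M : Type*} [AddCommMonoid M] {α : Type*} (P : Prop) [Decidable P]
    (s : Finset α) (f : α → M) :
    (if P then ∑ x ∈ s, f x else 0) = ∑ x ∈ s, (if P then f x else 0) := by
  split_ifs with h
  · rfl
  · rw [Finset.sum_const_zero]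

lemma tuple_fold (j n r : ℕ) (F : ℕ → ℕ → ℕ) :
    ∑ c ∈ (Finset.Nat.antidiagonalTuple (j+1) n).filter (fun c => ∀ i, 0 < c i),
      ∑ d ∈ Finset.Nat.antidiagonalTuple (j+1) r,
        F (c 0) (d 0) * ∏ i : Fin j, Mnat (c i.succ) 0 (d i.succ) (d i.succ + 1) =
    ∑ p ∈ (Finset.HasAntidiagonal.antidiagonal n).filter (fun p => 0 < p.1),
      ∑ q ∈ Finset.HasAntidiagonal.antidiagonal r, F p.1 q.1 * Gnat j p.2 q.2 := by
  rw [Finset.sum_filter, Finset.sum_filter]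
  rw [sum_tuple_succ j n (fun c => if (∀ i, 0 < c i) then
    ∑ d ∈ Finset.Nat.antidiagonalTuple (j+1) r,
      F (c 0) (d 0) * ∏ i : Fin j, Mnat (c i.succ) 0 (d i.succ) (d i.succ + 1) else 0)]
  refine Finset.sum_congr rfl (fun p _ => ?_)
  by_cases hp1 : 0 < p.1
  · rw [if_pos hp1]
    calc ∑ c ∈ Finset.Nat.antidiagonalTuple j p.2,
          (if (∀ i, 0 < (Fin.cons p.1 c : Fin (j+1) → ℕ) i) then
            ∑ d ∈ Finset.Nat.antidiagonalTuple (j+1) r,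
              F ((Fin.cons p.1 c : Fin (j+1) → ℕ) 0) (d 0) *
                ∏ i : Fin j, Mnat ((Fin.cons p.1 c : Fin (j+1) → ℕ) i.succ) 0
                  (d i.succ) (d i.succ + 1) else 0)
        = ∑ c ∈ Finset.Nat.antidiagonalTuple j p.2,
          (if (∀ i, 0 < c i) then
            ∑ q ∈ Finset.HasAntidiagonal.antidiagonal r, ∑ d ∈ Finset.Nat.antidiagonalTuple j q.2,
              F p.1 q.1 * ∏ i : Fin j, Mnat (c i) 0 (d i) (d i + 1) else 0) := by
          refine Finset.sum_congr rfl (fun c _ => ?_)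
          have hcond : (∀ i, 0 < (Fin.cons p.1 c : Fin (j+1) → ℕ) i) ↔ (∀ i, 0 < c i) := by
            rw [Fin.forall_fin_succ]
            simp only [Fin.cons_zero, Fin.cons_succ]
            constructor
            · exact fun h => h.2
            · exact fun h => ⟨hp1, h⟩
          rw [if_congr hcond rfl rfl]
          congr 1
          rw [sum_tuple_succ j r (fun d => F ((Fin.cons p.1 c : Fin (j+1) → ℕ) 0) (d 0) *
            ∏ i : Fin j, Mnat ((Fin.cons p.1 c : Fin (j+1) → ℕ) i.succ) 0
              (d i.succ) (d i.succ + 1))]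
          refine Finset.sum_congr rfl (fun q _ => Finset.sum_congr rfl (fun d _ => ?_))
          simp only [Fin.cons_zero, Fin.cons_succ]
      _ = ∑ q ∈ Finset.HasAntidiagonal.antidiagonal r, F p.1 q.1 * Gnat j p.2 q.2 := by
          have e1 : ∀ c : Fin j → ℕ, (if (∀ i, 0 < c i) then
              ∑ q ∈ Finset.HasAntidiagonal.antidiagonal r, ∑ d ∈ Finset.Nat.antidiagonalTuple j q.2,
                F p.1 q.1 * ∏ i : Fin j, Mnat (c i) 0 (d i) (d i + 1) else 0)
            = ∑ q ∈ Finset.HasAntidiagonal.antidiagonal r, (if (∀ i, 0 < c i) then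
                ∑ d ∈ Finset.Nat.antidiagonalTuple j q.2,
                  F p.1 q.1 * ∏ i : Fin j, Mnat (c i) 0 (d i) (d i + 1) else 0) :=
            fun c => ite_sum _ _ _
          simp only [e1]
          rw [Finset.sum_comm]
          refine Finset.sum_congr rfl (fun q _ => ?_)
          unfold Gnat
          rw [Finset.mul_sum, Finset.sum_filter]
          refine Finset.sum_congr rfl (fun c _ => ?_)
          split_ifs with h
          · rw [Finset.mul_sum]
          · rfl
  · rw [if_neg hp1]
    rw [Finset.sum_eq_zero]
    intro c _
    rw [if_neg]
    intro hall
    exact hp1 (by simpa using hall ⟨0, by omega⟩)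


lemma Gnat_one (n r : ℕ) : Gnat 1 n r = Mnat n 0 r (r + 1) := by
  unfold Gnat
  rw [Finset.Nat.antidiagonalTuple_one, Finset.Nat.antidiagonalTuple_one]
  rcases Nat.eq_zero_or_pos n with h | h
  · subst h
    rw [Mnat_zero_s 0 r (r+1) (by omega)]
    rw [Finset.filter_singleton, if_neg]
    · simp
    · intro hall
      have := hall 0
      simp at this
  · rw [Finset.filter_singleton, if_pos]
    · rw [Finset.sum_singleton, Finset.sum_singleton, Fin.prod_univ_one]
      simp
    · intro i
      simpa using h

lemma Gnat_succ (j n r : ℕ) :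
    Gnat (j+1) n r = ∑ p ∈ (Finset.HasAntidiagonal.antidiagonal n).filter (fun p => 0 < p.1),
      ∑ q ∈ Finset.HasAntidiagonal.antidiagonal r, Mnat p.1 0 q.1 (q.1 + 1) * Gnat j p.2 q.2 := by
  rw [← tuple_fold j n r (fun a b => Mnat a 0 b (b+1))]
  unfold Gnat
  refine Finset.sum_congr rfl (fun c _ => Finset.sum_congr rfl (fun d _ => ?_))
  rw [Fin.prod_univ_succ]

lemma claimC : ∀ j n r : ℕ, Mnat n 0 r (r + (j+1)) = Gnat (j+1) n r := by
  intro j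
  induction j with
  | zero => intro n r; rw [Gnat_one]
  | succ j ih =>
    intro n r
    have hcut := cut_lemma n r (j+2) 1 0 0 (by omega) (Or.inr ⟨rfl, rfl, rfl⟩)
    rw [hcut, Gnat_succ]
    refine Finset.sum_congr rfl (fun p _ => Finset.sum_congr rfl (fun q _ => ?_))
    rw [show j + 2 - 1 = j + 1 by omega]
    rw [ih p.2 q.2]

lemma main_nat (k j n r : ℕ) (hk : 1 ≤ k) (hj : 1 ≤ j) :
    Mnat n k r (r + j) =
      ∑ c ∈ (Finset.Nat.antidiagonalTuple (j+1) n).filter (fun c => ∀ i, 0 < c i),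
        ∑ d ∈ Finset.Nat.antidiagonalTuple (j+1) r,
          Mnat (c 0) (k-1) (d 0) (d 0) *
            ∏ i : Fin j, Mnat (c i.succ) 0 (d i.succ) (d i.succ + 1) := by
  rw [tuple_fold j n r (fun a b => Mnat a (k-1) b b)]
  obtain ⟨j', rfl⟩ : ∃ j', j = j' + 1 := ⟨j - 1, by omega⟩
  have hcut := cut_lemma n r (j'+1) 0 k (k-1) (by omega) (Or.inl ⟨rfl, by omega⟩)
  rw [hcut]
  refine Finset.sum_congr rfl (fun p _ => Finset.sum_congr rfl (fun q _ => ?_))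
  simp only [Nat.add_zero, Nat.sub_zero]
  congr 1
  exact claimC j' p.2 q.2

end LatticeAux

/-- Decomposition of pairs of paths with `k ≥ 1` intersections:
`M(n,k,r,r+j) = Σ N(n₀,k−1,r₀) · ∏_{i=1}^{j} M(nᵢ,0,rᵢ,rᵢ+1)` over compositions
`n₀+n₁+⋯+n_j = n` into positive parts and `r₀+r₁+⋯+r_j = r` into nonnegative parts. -/
theorem M_decomposition_intersecting (k j n r : ℕ) (hk : 1 ≤ k) (hj : 1 ≤ j)
    (hn : 1 ≤ n) :
    M n k r (r + j) =
      ∑ c ∈ (Finset.Nat.antidiagonalTuple (j + 1) n).filter (fun c => ∀ i, 0 < c i),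
        ∑ d ∈ Finset.Nat.antidiagonalTuple (j + 1) r,
          N (c 0) ((k : ℤ) - 1) (d 0) *
            ∏ i : Fin j, M (c i.succ) 0 (d i.succ) (d i.succ + 1) := by
  have hL : M (n:ℤ) (k:ℤ) (r:ℤ) ((r:ℤ) + (j:ℤ)) = (Mnat n k r (r + j) : ℤ) := by
    unfold M
    rw [if_pos ⟨Int.ofNat_nonneg n, Int.ofNat_nonneg k, Int.ofNat_nonneg r, by omega⟩]
    rw [Int.toNat_natCast, Int.toNat_natCast, Int.toNat_natCast,
      show ((r:ℤ)+(j:ℤ)).toNat = r + j by omega]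
  rw [hL, LatticeAux.main_nat k j n r hk hj]
  push_cast
  refine Finset.sum_congr rfl fun c _ => Finset.sum_congr rfl fun d _ => ?_
  have hN : ((Mnat (c 0) (k-1) (d 0) (d 0) : ℕ) : ℤ) = N (c 0) ((k:ℤ) - 1) (d 0) := by
    unfold N M
    rw [if_pos ⟨Int.ofNat_nonneg _, by omega, Int.ofNat_nonneg _, Int.ofNat_nonneg _⟩]
    rw [Int.toNat_natCast, Int.toNat_natCast, show ((k:ℤ)-1).toNat = k - 1 by omega]
  have hMt : ∀ i : Fin j, ((Mnat (c i.succ) 0 (d i.succ) (d i.succ + 1) : ℕ) : ℤ)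
      = M (c i.succ) 0 (d i.succ) ((d i.succ : ℤ) + 1) := by
    intro i
    unfold M
    rw [if_pos ⟨Int.ofNat_nonneg _, le_refl (0:ℤ), Int.ofNat_nonneg _, by omega⟩]
    rw [Int.toNat_natCast, Int.toNat_natCast,
      show ((d i.succ : ℤ) + 1).toNat = d i.succ + 1 by omega]
    rfl
  exact congrArg₂ (· * ·) hN (Finset.prod_congr rfl fun i _ => hMt i)
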